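/- Let a > 0, T > 0, let γ ∈ (0,1], set β = min(γ, 1/2), and let σ : ℝ² × [0,∞) → ℝ satisfy |σ(x,t)| ≤ C₀ for all x, t, and |σ(x,t) − σ(x,s)| ≤ |t−s|^γ for all x, t, s. Then there is a constant C (depending only on a, C₀, γ, T) such that for all x, y ∈ ℝ² with x ≠ y, all h ∈ (0,1], and all t₁, t₂ ∈ [0,T] with 0 < t₂ − t₁ < h: |G(x,y,t₁) − G(x,y,t₂)|² ≤ C h^{2β} / |x−y| whenever |x−y| < a T, and G(x,y,t₁) = G(x,y,t₂) = 0 whenever |x−y| ≥ a T. -/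

import Mathlib

open MeasureTheory Real

/-- The planar wave kernel. -/
noncomputable def waveKernel (a : ℝ) (σ : EuclideanSpace ℝ (Fin 2) → ℝ → ℝ)
    (x y : EuclideanSpace ℝ (Fin 2)) (t : ℝ) : ℝ :=
  if dist x y < a * t then
    (1 / (2 * Real.pi * a)) *
      ∫ τ in (0 : ℝ)..(t - dist x y / a),
        σ y τ / Real.sqrt (a ^ 2 * (t - τ) ^ 2 - (dist x y) ^ 2)
  else 0


lemma invSqrt_eq_rpow (u : ℝ) : (Real.sqrt u)⁻¹ = u ^ (-(1/2) : ℝ) := by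
  rcases lt_trichotomy u 0 with hu | hu | hu
  · rw [Real.sqrt_eq_zero_of_nonpos hu.le, inv_zero, Real.rpow_def_of_neg hu]
    rw [show (-(1/2) * π : ℝ) = -(π/2) by ring, Real.cos_neg, Real.cos_pi_div_two, mul_zero]
  · simp [hu, Real.zero_rpow (by norm_num : (-(1/2):ℝ) ≠ 0)]
  · rw [Real.rpow_neg hu.le, ← Real.sqrt_eq_rpow]

lemma intble_invSqrt (s c d : ℝ) :
    IntervalIntegrable (fun τ => (Real.sqrt (s - τ))⁻¹) volume c d := by
  have h : (fun τ : ℝ => (Real.sqrt (s - τ))⁻¹) = fun τ => (s - τ) ^ (-(1/2) : ℝ) :=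
    funext fun τ => invSqrt_eq_rpow _
  rw [h]
  have := (intervalIntegral.intervalIntegrable_rpow' (a := s - c) (b := s - d)
    (r := -(1/2)) (by norm_num)).comp_sub_left s
  simpa using this

lemma integral_invSqrt (s c d : ℝ) :
    ∫ τ in c..d, (Real.sqrt (s - τ))⁻¹ = 2 * Real.sqrt (s - c) - 2 * Real.sqrt (s - d) := by
  rw [intervalIntegral.integral_congr (g := fun τ => (fun u : ℝ => u ^ (-(1/2):ℝ)) (s - τ))
    (fun τ _ => invSqrt_eq_rpow _)]
  rw [intervalIntegral.integral_comp_sub_left (fun u : ℝ => u ^ (-(1/2):ℝ)) s]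
  rw [integral_rpow (Or.inl (by norm_num))]
  rw [Real.sqrt_eq_rpow, Real.sqrt_eq_rpow]
  norm_num
  ring

lemma my_sqrt_add_le (x y : ℝ) (hx : 0 ≤ x) (hy : 0 ≤ y) :
    Real.sqrt (x + y) ≤ Real.sqrt x + Real.sqrt y := by
  have h := Real.sqrt_le_sqrt (show x + y ≤ (Real.sqrt x + Real.sqrt y)^2 by
    nlinarith [Real.sq_sqrt hx, Real.sq_sqrt hy, Real.sqrt_nonneg x, Real.sqrt_nonneg y,
      mul_nonneg (Real.sqrt_nonneg x) (Real.sqrt_nonneg y)])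
  rwa [Real.sqrt_sq (by positivity)] at h

lemma Apos (a r t τ : ℝ) (ha : 0 < a) (hr : 0 < r) (hτ : τ < t - r/a) :
    0 < a^2*(t-τ)^2 - r^2 := by
  have he : a^2*(t-τ)^2 - r^2 = a^2*((t - r/a)-τ)^2 + 2*a*r*((t - r/a)-τ) := by
    field_simp; ring
  nlinarith [sq_nonneg (a*((t-r/a)-τ)),
    mul_pos (mul_pos (mul_pos two_pos ha) hr) (sub_pos.mpr hτ)]

lemma fmono (a r t₁ t₂ τ : ℝ) (ha : 0 < a) (hr : 0 < r)
    (hτ : τ < t₁ - r/a) (ht : t₁ ≤ t₂) :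
    1 / Real.sqrt (a^2*(t₂-τ)^2 - r^2) ≤ 1 / Real.sqrt (a^2*(t₁-τ)^2 - r^2) := by
  have h1 : 0 < a^2*(t₁-τ)^2 - r^2 := Apos a r t₁ τ ha hr hτ
  have hτt : τ < t₁ := by
    have : 0 < r / a := div_pos hr ha
    linarith
  have h2 : a^2*(t₁-τ)^2 - r^2 ≤ a^2*(t₂-τ)^2 - r^2 := by
    nlinarith [mul_nonneg (sq_nonneg a)
      (mul_nonneg (sub_nonneg.2 ht) (show (0:ℝ) ≤ t₂ + t₁ - 2*τ by linarith))]
  rw [one_div, one_div]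
  exact inv_anti₀ (Real.sqrt_pos.mpr h1) (Real.sqrt_le_sqrt h2)

lemma holder_contOn (g : ℝ → ℝ) (γ : ℝ) (hγ : 0 < γ)
    (hg : ∀ t s : ℝ, 0 ≤ t → 0 ≤ s → |g t - g s| ≤ |t - s| ^ γ) :
    ContinuousOn g (Set.Ici 0) := by
  intro t ht
  rw [Metric.continuousWithinAt_iff]
  intro ε hε
  refine ⟨ε ^ (1/γ), Real.rpow_pos_of_pos hε _, fun x hx hdist => ?_⟩
  rw [Real.dist_eq] at hdist ⊢
  have h1 : |x - t| ^ γ < (ε ^ (1/γ)) ^ γ :=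
    Real.rpow_lt_rpow (abs_nonneg _) hdist hγ
  rw [← Real.rpow_mul hε.le, one_div, inv_mul_cancel₀ hγ.ne', Real.rpow_one] at h1
  exact lt_of_le_of_lt (hg x t hx ht) h1

-- pointwise bound
lemma ptwise (a r t : ℝ) (ha : 0 < a) (hr : 0 < r) (τ : ℝ) (hτs : τ ≤ t - r / a) :
    (Real.sqrt (a^2*(t-τ)^2 - r^2))⁻¹
      ≤ (Real.sqrt (2*a*r))⁻¹ * (Real.sqrt (t - r/a - τ))⁻¹ := by
  set s := t - r / a with hs
  have he : a^2*(t-τ)^2 - r^2 = a^2*(s-τ)^2 + 2*a*r*(s-τ) := by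
    rw [hs]; field_simp; ring
  have hA : 2*a*r*(s - τ) ≤ a^2*(t-τ)^2 - r^2 := by nlinarith [sq_nonneg (a*(s-τ))]
  have h2ar : 0 ≤ 2*a*r := by positivity
  rw [← mul_inv, ← Real.sqrt_mul h2ar]
  rcases eq_or_lt_of_le (mul_nonneg h2ar (sub_nonneg.mpr hτs)) with h0 | h0
  · rw [← h0, Real.sqrt_zero, inv_zero]
    rcases mul_eq_zero.mp h0.symm with h | h
    · exact absurd h (by positivity)
    · have hz : a^2*(t-τ)^2 - r^2 = 0 := by rw [he, h]; ring
      rw [hz, Real.sqrt_zero, inv_zero]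
  · exact inv_anti₀ (Real.sqrt_pos.mpr h0) (Real.sqrt_le_sqrt hA)

lemma key (a r C₀ : ℝ) (ha : 0 < a) (hr : 0 < r) (hC₀ : 0 ≤ C₀)
    (g : ℝ → ℝ) (hg_cont : ContinuousOn g (Set.Ici 0)) (hg_bdd : ∀ τ, 0 ≤ τ → |g τ| ≤ C₀)
    (t c d : ℝ) (h0c : 0 ≤ c) (hcd : c ≤ d) (hds : d ≤ t - r / a) :
    IntervalIntegrable (fun τ => g τ / Real.sqrt (a^2*(t-τ)^2 - r^2)) volume c d ∧
    |∫ τ in c..d, g τ / Real.sqrt (a^2*(t-τ)^2 - r^2)|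
      ≤ 2 * C₀ * (Real.sqrt (2*a*r))⁻¹ * Real.sqrt (d - c) := by
  set s := t - r / a with hs
  set B : ℝ → ℝ := fun τ => C₀ * ((Real.sqrt (2*a*r))⁻¹ * (Real.sqrt (s - τ))⁻¹) with hB
  have hBi : IntervalIntegrable B volume c d :=
    ((intble_invSqrt s c d).const_mul _).const_mul _
  have hsub : Set.uIoc c d ⊆ Set.Ici 0 := by
    rw [Set.uIoc_of_le hcd]; exact fun τ hτ => le_trans h0c hτ.1.le
  have hae : ∀ᵐ τ ∂(volume.restrict (Set.uIoc c d)),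
      ‖g τ / Real.sqrt (a^2*(t-τ)^2 - r^2)‖ ≤ B τ := by
    rw [ae_restrict_iff' measurableSet_uIoc]
    refine Filter.Eventually.of_forall fun τ hτ => ?_
    have hτ0 : 0 ≤ τ := hsub hτ
    have hτs : τ ≤ s := by rw [Set.uIoc_of_le hcd] at hτ; exact hτ.2.trans hds
    have h1 : (Real.sqrt (a^2*(t-τ)^2 - r^2))⁻¹
        ≤ (Real.sqrt (2*a*r))⁻¹ * (Real.sqrt (s - τ))⁻¹ := ptwise a r t ha hr τ hτs
    rw [Real.norm_eq_abs, div_eq_mul_inv, abs_mul,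
      abs_of_nonneg (inv_nonneg.mpr (Real.sqrt_nonneg _))]
    exact mul_le_mul (hg_bdd τ hτ0) h1 (by positivity) hC₀
  have hmeas : AEStronglyMeasurable (fun τ => g τ / Real.sqrt (a^2*(t-τ)^2 - r^2))
      (volume.restrict (Set.uIoc c d)) := by
    have hrw : (fun τ => g τ / Real.sqrt (a^2*(t-τ)^2 - r^2))
        = fun τ => g τ * (Real.sqrt (a^2*(t-τ)^2 - r^2))⁻¹ :=
      funext fun τ => div_eq_mul_inv _ _
    rw [hrw]
    exact ((hg_cont.mono hsub).aestronglyMeasurable measurableSet_uIoc).mul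
      (Measurable.aestronglyMeasurable (by fun_prop))
  have hInt : IntervalIntegrable (fun τ => g τ / Real.sqrt (a^2*(t-τ)^2 - r^2)) volume c d :=
    hBi.mono_fun' hmeas hae
  refine ⟨hInt, ?_⟩
  have hnorm := intervalIntegral.norm_integral_le_abs_of_norm_le hae hBi
  rw [Real.norm_eq_abs] at hnorm
  refine hnorm.trans ?_
  have hIB : ∫ τ in c..d, B τ
      = C₀ * ((Real.sqrt (2*a*r))⁻¹ * (2 * Real.sqrt (s - c) - 2 * Real.sqrt (s - d))) := by
    rw [hB]
    rw [intervalIntegral.integral_const_mul, intervalIntegral.integral_const_mul,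
      integral_invSqrt]
  rw [hIB]
  have hsd : 0 ≤ s - d := sub_nonneg.mpr hds
  have hdc : 0 ≤ d - c := sub_nonneg.mpr hcd
  have hmono : Real.sqrt (s - c) - Real.sqrt (s - d) ≤ Real.sqrt (d - c) := by
    have := my_sqrt_add_le (s - d) (d - c) hsd hdc
    rw [show s - d + (d - c) = s - c by ring] at this
    linarith
  have hge : 0 ≤ 2 * Real.sqrt (s - c) - 2 * Real.sqrt (s - d) := by
    have := Real.sqrt_le_sqrt (show s - d ≤ s - c by linarith)
    linarith
  rw [abs_of_nonneg (by positivity)]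
  have hw : (0:ℝ) ≤ (Real.sqrt (2*a*r))⁻¹ := inv_nonneg.mpr (Real.sqrt_nonneg _)
  calc C₀ * ((Real.sqrt (2*a*r))⁻¹ * (2 * Real.sqrt (s - c) - 2 * Real.sqrt (s - d)))
      ≤ C₀ * ((Real.sqrt (2*a*r))⁻¹ * (2 * Real.sqrt (d - c))) := by
        refine mul_le_mul_of_nonneg_left (mul_le_mul_of_nonneg_left ?_ hw) hC₀
        linarith
    _ = 2 * C₀ * (Real.sqrt (2*a*r))⁻¹ * Real.sqrt (d - c) := by ring

lemma main_est (a r C₀ h t₁ t₂ : ℝ) (ha : 0 < a) (hr : 0 < r) (hC₀ : 0 ≤ C₀)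
    (g : ℝ → ℝ) (hg_cont : ContinuousOn g (Set.Ici 0)) (hg_bdd : ∀ τ, 0 ≤ τ → |g τ| ≤ C₀)
    (ht₁0 : 0 ≤ t₁) (hδ0 : 0 < t₂ - t₁) (hδh : t₂ - t₁ < h) :
    |(if r < a * t₁ then
        (1 / (2 * π * a)) * ∫ τ in (0:ℝ)..(t₁ - r/a), g τ / Real.sqrt (a^2*(t₁-τ)^2 - r^2)
      else 0)
     - (if r < a * t₂ then
        (1 / (2 * π * a)) * ∫ τ in (0:ℝ)..(t₂ - r/a), g τ / Real.sqrt (a^2*(t₂-τ)^2 - r^2)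
      else 0)|
    ≤ (1/(2*π*a)) * (6*C₀*(Real.sqrt (2*a*r))⁻¹ * Real.sqrt h) := by
  have hπ : (0:ℝ) < π := Real.pi_pos
  have hc : (0:ℝ) < 1/(2*π*a) := by positivity
  have hw : (0:ℝ) ≤ (Real.sqrt (2*a*r))⁻¹ := inv_nonneg.mpr (Real.sqrt_nonneg _)
  have hh0 : (0:ℝ) ≤ h := by linarith
  have hsh : Real.sqrt (t₂ - t₁) ≤ Real.sqrt h := Real.sqrt_le_sqrt hδh.le
  by_cases h2 : r < a * t₂
  · have hs₂ : 0 < t₂ - r/a := by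
      rw [sub_pos, div_lt_iff₀ ha]; linarith [h2]
    by_cases h1 : r < a * t₁
    · -- main case
      rw [if_pos h1, if_pos h2]
      have hs₁ : 0 < t₁ - r/a := by
        rw [sub_pos, div_lt_iff₀ ha]; linarith [h1]
      have hs12 : t₁ - r/a ≤ t₂ - r/a := by linarith
      have hδs₂ : t₂ - t₁ ≤ t₂ - r/a := by
        have : r/a ≤ t₁ := by rw [div_le_iff₀ ha]; nlinarith [h1]
        linarith
      -- integrability of g·f₂ pieces
      have k2a := key a r C₀ ha hr hC₀ g hg_cont hg_bdd t₂ 0 (t₁ - r/a) le_rfl hs₁.le hs12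
      have k2b := key a r C₀ ha hr hC₀ g hg_cont hg_bdd t₂ (t₁ - r/a) (t₂ - r/a) hs₁.le hs12 le_rfl
      have k1 := key a r C₀ ha hr hC₀ g hg_cont hg_bdd t₁ 0 (t₁ - r/a) le_rfl hs₁.le le_rfl
      have hone_bdd : ∀ τ : ℝ, 0 ≤ τ → |(1:ℝ)| ≤ 1 := fun τ _ => by norm_num
      have j2a := key a r 1 ha hr zero_le_one (fun _ => 1) continuousOn_const hone_bdd
        t₂ 0 (t₁ - r/a) le_rfl hs₁.le hs12
      have j2b := key a r 1 ha hr zero_le_one (fun _ => 1) continuousOn_const hone_bdd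
        t₂ (t₁ - r/a) (t₂ - r/a) hs₁.le hs12 le_rfl
      have j2c := key a r 1 ha hr zero_le_one (fun _ => 1) continuousOn_const hone_bdd
        t₂ 0 (t₂ - t₁) le_rfl hδ0.le hδs₂
      have j2d := key a r 1 ha hr zero_le_one (fun _ => 1) continuousOn_const hone_bdd
        t₂ (t₂ - t₁) (t₂ - r/a) hδ0.le hδs₂ le_rfl
      have j1 := key a r 1 ha hr zero_le_one (fun _ => 1) continuousOn_const hone_bdd
        t₁ 0 (t₁ - r/a) le_rfl hs₁.le le_rfl
      -- split of the t₂ integral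
      have hsplit : ∫ τ in (0:ℝ)..(t₂ - r/a), g τ / Real.sqrt (a^2*(t₂-τ)^2 - r^2)
          = (∫ τ in (0:ℝ)..(t₁ - r/a), g τ / Real.sqrt (a^2*(t₂-τ)^2 - r^2))
            + ∫ τ in (t₁ - r/a)..(t₂ - r/a), g τ / Real.sqrt (a^2*(t₂-τ)^2 - r^2) :=
        (intervalIntegral.integral_add_adjacent_intervals k2a.1 k2b.1).symm
      -- shift identity for pure kernels
      have hshift : ∫ τ in (0:ℝ)..(t₁ - r/a), 1 / Real.sqrt (a^2*(t₁-τ)^2 - r^2)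
          = ∫ τ in (t₂ - t₁)..(t₂ - r/a), 1 / Real.sqrt (a^2*(t₂-τ)^2 - r^2) := by
        have e1 : ∀ τ : ℝ, 1 / Real.sqrt (a^2*(t₁-τ)^2 - r^2)
            = (fun u => 1 / Real.sqrt (a^2*(t₂-u)^2 - r^2)) (τ + (t₂ - t₁)) := fun τ => by
          simp only []
          rw [show t₂ - (τ + (t₂ - t₁)) = t₁ - τ by ring]
        rw [intervalIntegral.integral_congr (g := fun τ =>
          (fun u => 1 / Real.sqrt (a^2*(t₂-u)^2 - r^2)) (τ + (t₂ - t₁))) (fun τ _ => e1 τ)]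
        have hcomp := intervalIntegral.integral_comp_add_right (a := 0) (b := t₁ - r/a)
          (fun u => 1 / Real.sqrt (a^2*(t₂-u)^2 - r^2)) (t₂ - t₁)
        rw [zero_add, show t₁ - r/a + (t₂ - t₁) = t₂ - r/a by ring] at hcomp
        exact hcomp
      -- J difference identity
      have hJsplit1 : (∫ τ in (0:ℝ)..(t₂ - t₁), 1 / Real.sqrt (a^2*(t₂-τ)^2 - r^2))
            + ∫ τ in (t₂ - t₁)..(t₂ - r/a), 1 / Real.sqrt (a^2*(t₂-τ)^2 - r^2)
          = ∫ τ in (0:ℝ)..(t₂ - r/a), 1 / Real.sqrt (a^2*(t₂-τ)^2 - r^2) :=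
        intervalIntegral.integral_add_adjacent_intervals j2c.1 j2d.1
      have hJsplit2 : (∫ τ in (0:ℝ)..(t₁ - r/a), 1 / Real.sqrt (a^2*(t₂-τ)^2 - r^2))
            + ∫ τ in (t₁ - r/a)..(t₂ - r/a), 1 / Real.sqrt (a^2*(t₂-τ)^2 - r^2)
          = ∫ τ in (0:ℝ)..(t₂ - r/a), 1 / Real.sqrt (a^2*(t₂-τ)^2 - r^2) :=
        intervalIntegral.integral_add_adjacent_intervals j2a.1 j2b.1
      have hJdiff : (∫ τ in (0:ℝ)..(t₁ - r/a), 1 / Real.sqrt (a^2*(t₁-τ)^2 - r^2))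
            - ∫ τ in (0:ℝ)..(t₁ - r/a), 1 / Real.sqrt (a^2*(t₂-τ)^2 - r^2)
          = (∫ τ in (t₁ - r/a)..(t₂ - r/a), 1 / Real.sqrt (a^2*(t₂-τ)^2 - r^2))
            - ∫ τ in (0:ℝ)..(t₂ - t₁), 1 / Real.sqrt (a^2*(t₂-τ)^2 - r^2) := by
        rw [hshift]; linarith [hJsplit1, hJsplit2]
      -- bound on the J difference
      have hJbnd : |(∫ τ in (0:ℝ)..(t₁ - r/a), 1 / Real.sqrt (a^2*(t₁-τ)^2 - r^2))
            - ∫ τ in (0:ℝ)..(t₁ - r/a), 1 / Real.sqrt (a^2*(t₂-τ)^2 - r^2)|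
          ≤ 4 * (Real.sqrt (2*a*r))⁻¹ * Real.sqrt (t₂ - t₁) := by
        rw [hJdiff]
        have b1 := j2b.2
        have b2 := j2c.2
        rw [show t₂ - r/a - (t₁ - r/a) = t₂ - t₁ by ring] at b1
        rw [show t₂ - t₁ - 0 = t₂ - t₁ by ring] at b2
        calc |(∫ τ in (t₁ - r/a)..(t₂ - r/a), 1 / Real.sqrt (a^2*(t₂-τ)^2 - r^2))
              - ∫ τ in (0:ℝ)..(t₂ - t₁), 1 / Real.sqrt (a^2*(t₂-τ)^2 - r^2)|
            ≤ |∫ τ in (t₁ - r/a)..(t₂ - r/a), 1 / Real.sqrt (a^2*(t₂-τ)^2 - r^2)|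
              + |∫ τ in (0:ℝ)..(t₂ - t₁), 1 / Real.sqrt (a^2*(t₂-τ)^2 - r^2)| := abs_sub _ _
          _ ≤ 2 * 1 * (Real.sqrt (2*a*r))⁻¹ * Real.sqrt (t₂ - t₁)
              + 2 * 1 * (Real.sqrt (2*a*r))⁻¹ * Real.sqrt (t₂ - t₁) := add_le_add b1 b2
          _ = 4 * (Real.sqrt (2*a*r))⁻¹ * Real.sqrt (t₂ - t₁) := by ring
      -- term B : a.e. bound
      have hTermB : |(∫ τ in (0:ℝ)..(t₁ - r/a), g τ / Real.sqrt (a^2*(t₁-τ)^2 - r^2))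
            - ∫ τ in (0:ℝ)..(t₁ - r/a), g τ / Real.sqrt (a^2*(t₂-τ)^2 - r^2)|
          ≤ 4 * C₀ * (Real.sqrt (2*a*r))⁻¹ * Real.sqrt (t₂ - t₁) := by
        have hintsub : (∫ τ in (0:ℝ)..(t₁ - r/a), g τ / Real.sqrt (a^2*(t₁-τ)^2 - r^2))
              - ∫ τ in (0:ℝ)..(t₁ - r/a), g τ / Real.sqrt (a^2*(t₂-τ)^2 - r^2)
            = ∫ τ in (0:ℝ)..(t₁ - r/a),
                (g τ / Real.sqrt (a^2*(t₁-τ)^2 - r^2) - g τ / Real.sqrt (a^2*(t₂-τ)^2 - r^2)) :=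
          (intervalIntegral.integral_sub k1.1 k2a.1).symm
        rw [hintsub]
        have hne : ∀ᵐ τ ∂(volume.restrict (Set.uIoc (0:ℝ) (t₁ - r/a))), τ ≠ t₁ - r/a :=
          ae_restrict_of_ae (by
            rw [ae_iff]
            simp only [not_not, Set.setOf_eq_eq_singleton]
            exact measure_singleton _)
        have hmem : ∀ᵐ τ ∂(volume.restrict (Set.uIoc (0:ℝ) (t₁ - r/a))),
            τ ∈ Set.uIoc (0:ℝ) (t₁ - r/a) := ae_restrict_mem measurableSet_uIoc
        have hae : ∀ᵐ τ ∂(volume.restrict (Set.uIoc (0:ℝ) (t₁ - r/a))),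
            ‖g τ / Real.sqrt (a^2*(t₁-τ)^2 - r^2) - g τ / Real.sqrt (a^2*(t₂-τ)^2 - r^2)‖
            ≤ C₀ * (1 / Real.sqrt (a^2*(t₁-τ)^2 - r^2) - 1 / Real.sqrt (a^2*(t₂-τ)^2 - r^2)) := by
          filter_upwards [hne, hmem] with τ hτne hτmem
          rw [Set.uIoc_of_le hs₁.le] at hτmem
          have hτ0 : 0 ≤ τ := hτmem.1.le
          have hτlt : τ < t₁ - r/a := lt_of_le_of_ne hτmem.2 hτne
          have hmono := fmono a r t₁ t₂ τ ha hr hτlt (by linarith)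
          have hdiff0 : 0 ≤ 1 / Real.sqrt (a^2*(t₁-τ)^2 - r^2)
              - 1 / Real.sqrt (a^2*(t₂-τ)^2 - r^2) := by linarith
          rw [Real.norm_eq_abs, show g τ / Real.sqrt (a^2*(t₁-τ)^2 - r^2)
              - g τ / Real.sqrt (a^2*(t₂-τ)^2 - r^2)
            = g τ * (1 / Real.sqrt (a^2*(t₁-τ)^2 - r^2)
              - 1 / Real.sqrt (a^2*(t₂-τ)^2 - r^2)) by ring]
          rw [abs_mul, abs_of_nonneg hdiff0]
          exact mul_le_mul_of_nonneg_right (hg_bdd τ hτ0) hdiff0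
        have hBint : IntervalIntegrable (fun τ =>
            C₀ * (1 / Real.sqrt (a^2*(t₁-τ)^2 - r^2) - 1 / Real.sqrt (a^2*(t₂-τ)^2 - r^2)))
            volume 0 (t₁ - r/a) := (j1.1.sub j2a.1).const_mul C₀
        have hb := intervalIntegral.norm_integral_le_abs_of_norm_le hae hBint
        rw [Real.norm_eq_abs] at hb
        refine hb.trans ?_
        rw [intervalIntegral.integral_const_mul, intervalIntegral.integral_sub j1.1 j2a.1,
          abs_mul, abs_of_nonneg hC₀]
        calc C₀ * |(∫ τ in (0:ℝ)..(t₁ - r/a), 1 / Real.sqrt (a^2*(t₁-τ)^2 - r^2))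
              - ∫ τ in (0:ℝ)..(t₁ - r/a), 1 / Real.sqrt (a^2*(t₂-τ)^2 - r^2)|
            ≤ C₀ * (4 * (Real.sqrt (2*a*r))⁻¹ * Real.sqrt (t₂ - t₁)) :=
              mul_le_mul_of_nonneg_left hJbnd hC₀
          _ = 4 * C₀ * (Real.sqrt (2*a*r))⁻¹ * Real.sqrt (t₂ - t₁) := by ring
      -- term A
      have hTermA : |∫ τ in (t₁ - r/a)..(t₂ - r/a), g τ / Real.sqrt (a^2*(t₂-τ)^2 - r^2)|
          ≤ 2 * C₀ * (Real.sqrt (2*a*r))⁻¹ * Real.sqrt (t₂ - t₁) := by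
        have := k2b.2
        rwa [show t₂ - r/a - (t₁ - r/a) = t₂ - t₁ by ring] at this
      -- combine
      rw [← mul_sub, abs_mul, abs_of_pos hc]
      refine mul_le_mul_of_nonneg_left ?_ hc.le
      rw [hsplit]
      calc |(∫ τ in (0:ℝ)..(t₁ - r/a), g τ / Real.sqrt (a^2*(t₁-τ)^2 - r^2))
            - ((∫ τ in (0:ℝ)..(t₁ - r/a), g τ / Real.sqrt (a^2*(t₂-τ)^2 - r^2))
              + ∫ τ in (t₁ - r/a)..(t₂ - r/a), g τ / Real.sqrt (a^2*(t₂-τ)^2 - r^2))|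
          ≤ |(∫ τ in (0:ℝ)..(t₁ - r/a), g τ / Real.sqrt (a^2*(t₁-τ)^2 - r^2))
            - ∫ τ in (0:ℝ)..(t₁ - r/a), g τ / Real.sqrt (a^2*(t₂-τ)^2 - r^2)|
            + |∫ τ in (t₁ - r/a)..(t₂ - r/a), g τ / Real.sqrt (a^2*(t₂-τ)^2 - r^2)| := by
            rw [show (∫ τ in (0:ℝ)..(t₁ - r/a), g τ / Real.sqrt (a^2*(t₁-τ)^2 - r^2))
              - ((∫ τ in (0:ℝ)..(t₁ - r/a), g τ / Real.sqrt (a^2*(t₂-τ)^2 - r^2))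
                + ∫ τ in (t₁ - r/a)..(t₂ - r/a), g τ / Real.sqrt (a^2*(t₂-τ)^2 - r^2))
              = ((∫ τ in (0:ℝ)..(t₁ - r/a), g τ / Real.sqrt (a^2*(t₁-τ)^2 - r^2))
                - ∫ τ in (0:ℝ)..(t₁ - r/a), g τ / Real.sqrt (a^2*(t₂-τ)^2 - r^2))
                - ∫ τ in (t₁ - r/a)..(t₂ - r/a), g τ / Real.sqrt (a^2*(t₂-τ)^2 - r^2) by ring]
            exact abs_sub _ _
        _ ≤ 4 * C₀ * (Real.sqrt (2*a*r))⁻¹ * Real.sqrt (t₂ - t₁)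
            + 2 * C₀ * (Real.sqrt (2*a*r))⁻¹ * Real.sqrt (t₂ - t₁) := add_le_add hTermB hTermA
        _ = 6 * C₀ * (Real.sqrt (2*a*r))⁻¹ * Real.sqrt (t₂ - t₁) := by ring
        _ ≤ 6*C₀*(Real.sqrt (2*a*r))⁻¹ * Real.sqrt h := by
            refine mul_le_mul_of_nonneg_left hsh (by positivity)
    · -- t₁ branch vanishes
      rw [if_neg h1, if_pos h2]
      have hs₂δ : t₂ - r/a ≤ t₂ - t₁ := by
        have : t₁ ≤ r/a := by rw [le_div_iff₀ ha]; nlinarith [not_lt.mp h1]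
        linarith
      obtain ⟨_, hb⟩ := key a r C₀ ha hr hC₀ g hg_cont hg_bdd t₂ 0 (t₂ - r/a)
        le_rfl hs₂.le le_rfl
      rw [zero_sub, abs_neg, abs_mul, abs_of_pos hc]
      refine mul_le_mul_of_nonneg_left ?_ hc.le
      refine hb.trans ?_
      have hss : Real.sqrt (t₂ - r/a - 0) ≤ Real.sqrt h := by
        rw [sub_zero]; exact Real.sqrt_le_sqrt (by linarith)
      calc 2*C₀*(Real.sqrt (2*a*r))⁻¹ * Real.sqrt (t₂ - r/a - 0)
          ≤ 2*C₀*(Real.sqrt (2*a*r))⁻¹ * Real.sqrt h :=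
            mul_le_mul_of_nonneg_left hss (by positivity)
        _ ≤ 6*C₀*(Real.sqrt (2*a*r))⁻¹ * Real.sqrt h := by
            nlinarith [Real.sqrt_nonneg h, hw, hC₀,
              mul_nonneg (mul_nonneg hC₀ hw) (Real.sqrt_nonneg h)]
  · -- both vanish
    have h1 : ¬ r < a * t₁ := by
      intro hcon; exact h2 (by nlinarith)
    rw [if_neg h1, if_neg h2]
    simp only [sub_zero, abs_zero]
    positivity

/-- Combined squared time-increment bound for the planar wave kernel, with
`β = min(γ, 1/2)`: for `0 < t₂ - t₁ < h ≤ 1`,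
`|G(x,y,t₁) - G(x,y,t₂)|² ≤ C h^{2β}/|x-y|` when `|x-y| < aT`, and the kernel
vanishes when `|x-y| ≥ aT`. -/
theorem waveKernel_squared_increment_bound
    (a T : ℝ) (ha : 0 < a) (hT : 0 < T)
    (γ : ℝ) (hγ : γ ∈ Set.Ioc (0 : ℝ) 1) (β : ℝ) (hβ : β = min γ (1 / 2))
    (σ : EuclideanSpace ℝ (Fin 2) → ℝ → ℝ) (C₀ : ℝ)
    (hσ_bdd : ∀ x : EuclideanSpace ℝ (Fin 2), ∀ t : ℝ, 0 ≤ t → |σ x t| ≤ C₀)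
    (hσ_hold : ∀ x : EuclideanSpace ℝ (Fin 2), ∀ t s : ℝ, 0 ≤ t → 0 ≤ s →
      |σ x t - σ x s| ≤ |t - s| ^ γ) :
    ∃ C : ℝ, 0 < C ∧
      ∀ (x y : EuclideanSpace ℝ (Fin 2)) (h t₁ t₂ : ℝ),
        x ≠ y → h ∈ Set.Ioc (0 : ℝ) 1 →
        t₁ ∈ Set.Icc (0 : ℝ) T → t₂ ∈ Set.Icc (0 : ℝ) T →
        0 < t₂ - t₁ → t₂ - t₁ < h →
        (dist x y < a * T →
          |waveKernel a σ x y t₁ - waveKernel a σ x y t₂| ^ 2 ≤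
            C * h ^ (2 * β) / dist x y) ∧
        (a * T ≤ dist x y →
          waveKernel a σ x y t₁ = 0 ∧ waveKernel a σ x y t₂ = 0) := by
  have hπ : (0:ℝ) < π := Real.pi_pos
  have hC₀0 : 0 ≤ C₀ := le_trans (abs_nonneg _) (hσ_bdd 0 0 le_rfl)
  refine ⟨9*(C₀+1)^2/(π^2*a^3) + 1, by positivity, ?_⟩
  intro x y h t₁ t₂ hxy hh ht₁ ht₂ hδ0 hδh
  have hr : 0 < dist x y := dist_pos.mpr hxy
  constructor
  · -- the estimate
    intro _
    have hcont : ContinuousOn (σ y) (Set.Ici 0) :=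
      holder_contOn (σ y) γ hγ.1 (fun t s hts hss => hσ_hold y t s hts hss)
    have hest := main_est a (dist x y) C₀ h t₁ t₂ ha hr hC₀0 (σ y) hcont
      (fun τ hτ => hσ_bdd y τ hτ) ht₁.1 hδ0 hδh
    have hKrw : waveKernel a σ x y t₁ - waveKernel a σ x y t₂
        = (if dist x y < a * t₁ then
            (1 / (2 * π * a)) * ∫ τ in (0:ℝ)..(t₁ - dist x y/a),
              σ y τ / Real.sqrt (a^2*(t₁-τ)^2 - dist x y^2) else 0)
          - (if dist x y < a * t₂ then
            (1 / (2 * π * a)) * ∫ τ in (0:ℝ)..(t₂ - dist x y/a),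
              σ y τ / Real.sqrt (a^2*(t₂-τ)^2 - dist x y^2) else 0) := rfl
    rw [hKrw]
    have hsq : |(if dist x y < a * t₁ then
            (1 / (2 * π * a)) * ∫ τ in (0:ℝ)..(t₁ - dist x y/a),
              σ y τ / Real.sqrt (a^2*(t₁-τ)^2 - dist x y^2) else 0)
          - (if dist x y < a * t₂ then
            (1 / (2 * π * a)) * ∫ τ in (0:ℝ)..(t₂ - dist x y/a),
              σ y τ / Real.sqrt (a^2*(t₂-τ)^2 - dist x y^2) else 0)| ^ 2
        ≤ ((1/(2*π*a)) * (6*C₀*(Real.sqrt (2*a*dist x y))⁻¹ * Real.sqrt h)) ^ 2 :=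
      pow_le_pow_left₀ (abs_nonneg _) hest 2
    refine hsq.trans ?_
    have h2ar : (0:ℝ) ≤ 2*a*dist x y := by positivity
    have hw2 : ((Real.sqrt (2*a*dist x y))⁻¹) ^ 2 = (2*a*dist x y)⁻¹ := by
      rw [inv_pow, Real.sq_sqrt h2ar]
    have hsh2 : (Real.sqrt h) ^ 2 = h := Real.sq_sqrt hh.1.le
    have hid : ((1/(2*π*a)) * (6*C₀*(Real.sqrt (2*a*dist x y))⁻¹ * Real.sqrt h)) ^ 2
        = (9*C₀^2/(π^2*a^2)) * (((Real.sqrt (2*a*dist x y))⁻¹)^2 * (Real.sqrt h)^2) := by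
      ring
    rw [hid, hw2, hsh2]
    have hβ2 : 2*β ≤ 1 := by
      rw [hβ]; have := min_le_right γ (1/2 : ℝ); linarith [this]
    have hhb : h ≤ h ^ (2*β) := by
      calc h = h ^ (1:ℝ) := (Real.rpow_one h).symm
        _ ≤ h ^ (2*β) := Real.rpow_le_rpow_of_exponent_ge hh.1 hh.2 hβ2
    have hrpos : (0:ℝ) < dist x y := hr
    have hane : a ≠ 0 := ha.ne'
    have hπne : π ≠ 0 := hπ.ne'
    have hDne : dist x y ≠ 0 := hrpos.ne'
    have hcoef : 9*C₀^2/(2*π^2*a^3) ≤ 9*(C₀+1)^2/(π^2*a^3) + 1 := by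
      have hstep : 9*C₀^2/(2*π^2*a^3) ≤ 9*(C₀+1)^2/(π^2*a^3) := by
        rw [div_le_div_iff₀ (by positivity) (by positivity)]
        nlinarith [mul_le_mul_of_nonneg_left (show 9*C₀^2 ≤ 18*(C₀+1)^2 by nlinarith)
          (show (0:ℝ) ≤ π^2*a^3 by positivity)]
      linarith
    have hnum : 9*C₀^2/(2*π^2*a^3) * h ≤ (9*(C₀+1)^2/(π^2*a^3) + 1) * h^(2*β) :=
      mul_le_mul hcoef hhb hh.1.le (by positivity)
    calc (9*C₀^2/(π^2*a^2)) * ((2*a*dist x y)⁻¹ * h)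
        = (9*C₀^2/(2*π^2*a^3)) * h / dist x y := by
          ring
      _ ≤ (9*(C₀+1)^2/(π^2*a^3) + 1) * h ^ (2*β) / dist x y := by
          rw [div_le_div_iff₀ hrpos hrpos]
          exact mul_le_mul_of_nonneg_right hnum hrpos.le
  · intro hge
    have h1 : ¬ dist x y < a * t₁ := not_lt.mpr (le_trans (by nlinarith [ht₁.2]) hge)
    have h2 : ¬ dist x y < a * t₂ := not_lt.mpr (le_trans (by nlinarith [ht₂.2]) hge)
    exact ⟨if_neg h1, if_neg h2⟩
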